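/- Let Θ : ℝ² → ℝ be continuous and 2π-periodic in each variable, and let ω : [0,∞) → [0,∞) be nondecreasing with ω(ξ) > 0 for all ξ > 0. If |Θ(x) − Θ(y)| < ω(|x − y|) for all x ≠ y with x, y ∈ [−2π,2π]², then |Θ(x) − Θ(y)| < ω(|x − y|) for all x ≠ y in ℝ². -/

import Mathlib

open Real

noncomputable section

abbrev Plane := EuclideanSpace ℝ (Fin 2)

/-- `2π`-periodicity in each variable. -/
def Periodic2 {α : Type*} (f : Plane → α) : Prop :=
  ∀ (x : Plane) (i : Fin 2), f (x + (2 * Real.pi) • EuclideanSpace.single i (1:ℝ)) = f x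

/-- The compact region `[-2π, 2π]²`. -/
def bigCube : Set Plane := {x | ∀ i, x i ∈ Set.Icc (-(2 * Real.pi)) (2 * Real.pi)}

/-- integer-lattice vector -/
def lat (k : Fin 2 → ℤ) : Plane :=
  (2 * Real.pi * k 0) • EuclideanSpace.single 0 (1:ℝ)
    + (2 * Real.pi * k 1) • EuclideanSpace.single 1 (1:ℝ)

lemma lat_apply (k : Fin 2 → ℤ) (i : Fin 2) : lat k i = 2 * Real.pi * k i := by
  fin_cases i <;>
    simp [lat, EuclideanSpace.single_apply, PiLp.add_apply, PiLp.smul_apply]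

lemma per_int {Θ : Plane → ℝ} (hΘp : Periodic2 Θ) (n : ℤ) (x : Plane) (i : Fin 2) :
    Θ (x + (2 * Real.pi * n) • EuclideanSpace.single i (1:ℝ)) = Θ x := by
  induction n using Int.induction_on with
  | zero => simp
  | succ n ih =>
      have : x + (2 * Real.pi * ((n : ℤ) + 1 : ℤ)) • EuclideanSpace.single i (1:ℝ)
          = (x + (2 * Real.pi * (n : ℤ)) • EuclideanSpace.single i (1:ℝ))
            + (2 * Real.pi) • EuclideanSpace.single i (1:ℝ) := by
        push_cast
        rw [add_assoc, ← add_smul]; ring_nf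
      rw [this, hΘp, ih]
  | pred n ih =>
      have key := hΘp (x + (2 * Real.pi * (-(n : ℤ) - 1 : ℤ)) • EuclideanSpace.single i (1:ℝ)) i
      have : x + (2 * Real.pi * (-(n : ℤ) - 1 : ℤ)) • EuclideanSpace.single i (1:ℝ)
            + (2 * Real.pi) • EuclideanSpace.single i (1:ℝ)
          = x + (2 * Real.pi * (-(n : ℤ) : ℤ)) • EuclideanSpace.single i (1:ℝ) := by
        push_cast
        rw [add_assoc, ← add_smul]; ring_nf
      rw [this, ih] at key
      exact key.symm

lemma per_lat {Θ : Plane → ℝ} (hΘp : Periodic2 Θ) (k : Fin 2 → ℤ) (x : Plane) :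
    Θ (x + lat k) = Θ x := by
  have : x + lat k = (x + (2 * Real.pi * k 0) • EuclideanSpace.single 0 (1:ℝ))
      + (2 * Real.pi * k 1) • EuclideanSpace.single 1 (1:ℝ) := by
    rw [lat, add_assoc]
  rw [this, per_int hΘp, per_int hΘp]

lemma norm_le_of_abs_le {u v : Plane} (h : ∀ i, |u i| ≤ |v i|) : ‖u‖ ≤ ‖v‖ := by
  rw [EuclideanSpace.norm_eq, EuclideanSpace.norm_eq]
  apply Real.sqrt_le_sqrt
  apply Finset.sum_le_sum
  intro i _
  simpa [sq_abs] using pow_le_pow_left₀ (abs_nonneg _) (h i) 2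

/-- Periodicity reduction: if a continuous `2π`-periodic function `Θ` satisfies the strict
modulus inequality `|Θ(x) − Θ(y)| < ω(|x−y|)` for all distinct `x, y ∈ [−2π,2π]²`, where `ω`
is nondecreasing and positive on `(0,∞)`, then it satisfies it for all distinct `x, y ∈ ℝ²`. -/
theorem strict_modulus_periodic_reduction (Θ : Plane → ℝ)
    (hΘc : Continuous Θ) (hΘp : Periodic2 Θ)
    (ω : ℝ → ℝ) (hmono : MonotoneOn ω (Set.Ici 0))
    (hnonneg : ∀ ξ ≥ (0:ℝ), 0 ≤ ω ξ) (hpos : ∀ ξ : ℝ, 0 < ξ → 0 < ω ξ)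
    (H : ∀ x ∈ bigCube, ∀ y ∈ bigCube, x ≠ y → |Θ x - Θ y| < ω ‖x - y‖) :
    ∀ x y : Plane, x ≠ y → |Θ x - Θ y| < ω ‖x - y‖ := by
  have pi_pos := Real.pi_pos
  have c_pos : (0:ℝ) < 2 * Real.pi := by linarith
  intro x y hxy
  have hnorm_pos : 0 < ‖x - y‖ := by
    rw [norm_pos_iff]; exact sub_ne_zero.mpr hxy
  -- reduction of a real number mod 2π
  set c := 2 * Real.pi with hc
  have red_le : ∀ t : ℝ, |t - c * round (t / c)| ≤ |t| := by
    intro t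
    have h0 := round_le (t / c) 0
    have : |t / c - round (t / c)| ≤ |t / c| := by simpa using h0
    have e : t - c * round (t / c) = c * (t / c - round (t / c)) := by
      field_simp
    calc |t - c * round (t / c)| = c * |t / c - round (t / c)| := by
          rw [e, abs_mul, abs_of_pos c_pos]
      _ ≤ c * |t / c| := by nlinarith [abs_nonneg (t / c - (round (t/c) : ℝ))]
      _ = |t| := by rw [abs_div, abs_of_pos c_pos]; field_simp
  have red_half : ∀ t : ℝ, |t - c * round (t / c)| ≤ Real.pi := by
    intro t
    have h0 := abs_sub_round (t / c)
    have e : t - c * round (t / c) = c * (t / c - round (t / c)) := by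
      field_simp
    calc |t - c * round (t / c)| = c * |t / c - round (t / c)| := by
          rw [e, abs_mul, abs_of_pos c_pos]
      _ ≤ c * (1/2) := by nlinarith
      _ = Real.pi := by rw [hc]; ring
  -- shifts
  set a : Fin 2 → ℤ := fun i => -round (x i / c) with ha
  set b : Fin 2 → ℤ := fun i => -round ((y i - x i) / c) + a i with hb
  set x' : Plane := x + lat a with hx'
  set y' : Plane := y + lat b with hy'
  have hx'i : ∀ i, x' i = x i - c * round (x i / c) := by
    intro i
    simp only [hx', PiLp.add_apply, lat_apply, ha]
    push_cast; ring
  have hy'i : ∀ i, y' i = y i - c * round ((y i - x i) / c) - c * round (x i / c) := by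
    intro i
    simp only [hy', PiLp.add_apply, lat_apply, hb, ha]
    push_cast; ring
  have hΘx : Θ x' = Θ x := per_lat hΘp a x
  have hΘy : Θ y' = Θ y := per_lat hΘp b y
  have hx'cube : x' ∈ bigCube := by
    intro i
    have := red_half (x i)
    rw [hx'i i]
    constructor
    · rw [abs_le] at this; linarith [this.1]
    · rw [abs_le] at this; linarith [this.2]
  have hdiff : ∀ i, |y' i - x' i| ≤ Real.pi := by
    intro i
    have e : y' i - x' i = (y i - x i) - c * round ((y i - x i) / c) := by
      rw [hy'i i, hx'i i]; ring
    rw [e]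
    exact red_half (y i - x i)
  have hy'cube : y' ∈ bigCube := by
    intro i
    have hx'abs : |x' i| ≤ Real.pi := by
      rw [hx'i i]; exact red_half (x i)
    have hy'abs : |y' i| ≤ 2 * Real.pi := by
      calc |y' i| = |(y' i - x' i) + x' i| := by ring_nf
        _ ≤ |y' i - x' i| + |x' i| := abs_add_le _ _
        _ ≤ Real.pi + Real.pi := add_le_add (hdiff i) hx'abs
        _ = 2 * Real.pi := by ring
    rw [abs_le] at hy'abs
    exact ⟨hy'abs.1, hy'abs.2⟩
  have hdiff_le : ∀ i, |x' i - y' i| ≤ |(x - y) i| := by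
    intro i
    have e : x' i - y' i = -((y i - x i) - c * round ((y i - x i) / c)) := by
      rw [hy'i i, hx'i i]; ring
    rw [e, abs_neg]
    have := red_le (y i - x i)
    calc |(y i - x i) - c * round ((y i - x i) / c)| ≤ |y i - x i| := this
      _ = |(x - y) i| := by rw [PiLp.sub_apply, abs_sub_comm]
  have hnle : ‖x' - y'‖ ≤ ‖x - y‖ := by
    apply norm_le_of_abs_le
    intro i
    rw [PiLp.sub_apply]
    exact hdiff_le i
  by_cases hxy' : x' = y'
  · have : Θ x = Θ y := by rw [← hΘx, ← hΘy, hxy']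
    rw [this, sub_self, abs_zero]
    exact hpos _ hnorm_pos
  · have key := H x' hx'cube y' hy'cube hxy'
    rw [hΘx, hΘy] at key
    calc |Θ x - Θ y| < ω ‖x' - y'‖ := key
      _ ≤ ω ‖x - y‖ := hmono (norm_nonneg _) (norm_nonneg _) hnle
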